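/- Let 0 < p ≤ 1, let L_m, L_j be integers with 2 ≤ L_m ≤ L_j, and let f : ℕ → ℝ be nondecreasing and bounded. Then ∑_{l} p_l^{(L_m)} · f(l) ≤ ∑_{l} p_l^{(L_j)} · f(l). -/

import Mathlib

/-- Shifted negative-binomial pmf. -/
noncomputable def pnb (p : ℝ) (L l : ℕ) : ℝ :=
  if L ≤ l then ((l - 2).choose (L - 2) : ℝ) * p ^ (L - 1) * (1 - p) ^ (l - L) else 0

lemma pnb_shift (p : ℝ) (r n : ℕ) :
    pnb p (r + 2) (n + (r + 2)) = ((n + r).choose r : ℝ) * p ^ (r + 1) * (1 - p) ^ n := by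
  have h0 : r + 2 ≤ n + (r + 2) := Nat.le_add_left _ _
  have h1 : n + (r + 2) - 2 = n + r := by omega
  have h2 : r + 2 - 2 = r := by omega
  have h3 : n + (r + 2) - (r + 2) = n := by omega
  have h4 : r + 2 - 1 = r + 1 := by omega
  simp [pnb, h0, h1, h2, h3, h4]

lemma pnb_nonneg {p : ℝ} (hp0 : 0 < p) (hp1 : p ≤ 1) (L l : ℕ) : 0 ≤ pnb p L l := by
  unfold pnb
  split
  · have hq : (0:ℝ) ≤ 1 - p := by linarith
    exact mul_nonneg (mul_nonneg (Nat.cast_nonneg _) (pow_nonneg hp0.le _)) (pow_nonneg hq _)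
  · exact le_refl 0

lemma summable_pnb_shift_mul {p : ℝ} (hp0 : 0 < p) (hp1 : p ≤ 1) {f : ℕ → ℝ} {M : ℝ}
    (hM : ∀ l, |f l| ≤ M) (r : ℕ) :
    Summable (fun n : ℕ => ‖pnb p (r + 2) (n + (r + 2)) * f (n + (r + 2))‖) := by
  have hq0 : (0:ℝ) ≤ 1 - p := by linarith
  have hq1 : ‖(1 - p : ℝ)‖ < 1 := by
    rw [Real.norm_eq_abs, abs_of_nonneg hq0]; linarith
  have hM0 : 0 ≤ M := (abs_nonneg _).trans (hM 0)
  have S := (summable_choose_mul_geometric_of_norm_lt_one (R := ℝ) r hq1).mul_left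
    (M * p ^ (r + 1))
  refine S.of_nonneg_of_le (fun n => norm_nonneg _) (fun n => ?_)
  rw [norm_mul, pnb_shift]
  have h1 : ‖((n + r).choose r : ℝ) * p ^ (r + 1) * (1 - p) ^ n‖
      = ((n + r).choose r : ℝ) * p ^ (r + 1) * (1 - p) ^ n := by
    rw [Real.norm_of_nonneg]
    exact mul_nonneg (mul_nonneg (Nat.cast_nonneg _) (pow_nonneg hp0.le _)) (pow_nonneg hq0 _)
  rw [h1]
  have h2 : ‖f (n + (r + 2))‖ ≤ M := by rw [Real.norm_eq_abs]; exact hM _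
  calc ((n + r).choose r : ℝ) * p ^ (r + 1) * (1 - p) ^ n * ‖f (n + (r + 2))‖
      ≤ ((n + r).choose r : ℝ) * p ^ (r + 1) * (1 - p) ^ n * M := by
        apply mul_le_mul_of_nonneg_left h2
        exact mul_nonneg (mul_nonneg (Nat.cast_nonneg _) (pow_nonneg hp0.le _)) (pow_nonneg hq0 _)
    _ = M * p ^ (r + 1) * (((n + r).choose r : ℝ) * (1 - p) ^ n) := by ring

lemma tsum_pnb_shift {p : ℝ} (hp0 : 0 < p) (hp1 : p ≤ 1) {f : ℕ → ℝ} {M : ℝ}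
    (hM : ∀ l, |f l| ≤ M) (r : ℕ) :
    ∑' l : ℕ, pnb p (r + 2) l * f l
      = ∑' n : ℕ, pnb p (r + 2) (n + (r + 2)) * f (n + (r + 2)) := by
  have hs : Summable (fun l : ℕ => pnb p (r + 2) l * f l) := by
    rw [← summable_nat_add_iff (r + 2)]
    exact (summable_pnb_shift_mul hp0 hp1 hM r).of_norm
  rw [← Summable.sum_add_tsum_nat_add (r + 2) hs]
  have : ∑ i ∈ Finset.range (r + 2), pnb p (r + 2) i * f i = 0 := by
    apply Finset.sum_eq_zero
    intro i hi
    have : ¬ (r + 2 ≤ i) := by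
      have := Finset.mem_range.mp hi; omega
    simp [pnb, this]
  rw [this, zero_add]

lemma pnb_conv (p : ℝ) (r n : ℕ) :
    ∑ kl ∈ Finset.HasAntidiagonal.antidiagonal n,
        (p * (1 - p) ^ kl.1) * (((kl.2 + r).choose r : ℝ) * p ^ (r + 1) * (1 - p) ^ kl.2)
      = ((n + (r + 1)).choose (r + 1) : ℝ) * p ^ (r + 2) * (1 - p) ^ n := by
  rw [Finset.Nat.sum_antidiagonal_eq_sum_range_succ_mk]
  have key : ∀ k ∈ Finset.range (n + 1),
      (p * (1 - p) ^ k) * (((n - k + r).choose r : ℝ) * p ^ (r + 1) * (1 - p) ^ (n - k))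
        = ((n - k + r).choose r : ℝ) * (p ^ (r + 2) * (1 - p) ^ n) := by
    intro k hk
    have hkn : k ≤ n := by have := Finset.mem_range.mp hk; omega
    have hq : (1 - p) ^ k * (1 - p) ^ (n - k) = (1 - p) ^ n := by
      rw [← pow_add]; congr 1; omega
    have hp : p * p ^ (r + 1) = p ^ (r + 2) := (pow_succ' p (r + 1)).symm
    calc (p * (1 - p) ^ k) * (((n - k + r).choose r : ℝ) * p ^ (r + 1) * (1 - p) ^ (n - k))
        = ((n - k + r).choose r : ℝ) *
            ((p * p ^ (r + 1)) * ((1 - p) ^ k * (1 - p) ^ (n - k))) := by ring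
      _ = ((n - k + r).choose r : ℝ) * (p ^ (r + 2) * (1 - p) ^ n) := by rw [hq, hp]
  rw [Finset.sum_congr rfl key, ← Finset.sum_mul]
  have hsum : ∑ k ∈ Finset.range (n + 1), ((n - k + r).choose r) = (n + (r + 1)).choose (r + 1) := by
    have hrefl := Finset.sum_range_reflect (fun i => (i + r).choose r) (n + 1)
    simp only [Nat.add_sub_cancel, Nat.succ_sub_one] at hrefl
    rw [hrefl, Nat.sum_range_add_choose, Nat.add_assoc]
  rw [← hsum]
  push_cast
  ring

lemma pnb_step {p : ℝ} (hp0 : 0 < p) (hp1 : p ≤ 1) {f : ℕ → ℝ} (hf : Monotone f) {M : ℝ}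
    (hM : ∀ l, |f l| ≤ M) (r : ℕ) :
    ∑' l : ℕ, pnb p (r + 2) l * f l ≤ ∑' l : ℕ, pnb p (r + 3) l * f l := by
  have hq0 : (0:ℝ) ≤ 1 - p := by linarith
  have hq1 : (1 - p : ℝ) < 1 := by linarith
  set a : ℕ → ℝ := fun k => p * (1 - p) ^ k with ha_def
  set b : ℕ → ℝ := fun j => pnb p (r + 2) (j + (r + 2)) * f (j + (r + 2)) with hb_def
  have ha_nonneg : ∀ k, 0 ≤ a k := fun k => mul_nonneg hp0.le (pow_nonneg hq0 _)
  have Sa : Summable a := (summable_geometric_of_lt_one hq0 hq1).mul_left p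
  have Sa_norm : Summable (fun k => ‖a k‖) :=
    Sa.congr (fun k => (Real.norm_of_nonneg (ha_nonneg k)).symm)
  have Sb_norm : Summable (fun j => ‖b j‖) := summable_pnb_shift_mul hp0 hp1 hM r
  have ha : ∑' k, a k = 1 := by
    rw [ha_def]
    rw [tsum_mul_left, tsum_geometric_of_lt_one hq0 hq1]
    have : (1 : ℝ) - (1 - p) = p := by ring
    rw [this, mul_inv_cancel₀ hp0.ne']
  have hS2 : Summable (fun n : ℕ => ‖pnb p (r + 3) (n + (r + 3)) * f (n + (r + 3))‖) := by
    have := summable_pnb_shift_mul hp0 hp1 hM (r + 1)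
    simpa [show r + 1 + 2 = r + 3 by omega] using this
  have h1 : ∀ n : ℕ, ∑ kl ∈ Finset.HasAntidiagonal.antidiagonal n, a kl.1 * b kl.2
      ≤ pnb p (r + 3) (n + (r + 3)) * f (n + (r + 3)) := by
    intro n
    have step1 : ∑ kl ∈ Finset.HasAntidiagonal.antidiagonal n, a kl.1 * b kl.2
        ≤ ∑ kl ∈ Finset.HasAntidiagonal.antidiagonal n,
            (a kl.1 * pnb p (r + 2) (kl.2 + (r + 2))) * f (n + (r + 3)) := by
      apply Finset.sum_le_sum
      intro kl hkl
      have hmem : kl.1 + kl.2 = n := Finset.HasAntidiagonal.mem_antidiagonal.mp hkl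
      have hle : kl.2 + (r + 2) ≤ n + (r + 3) := by omega
      have hnn : 0 ≤ a kl.1 * pnb p (r + 2) (kl.2 + (r + 2)) :=
        mul_nonneg (ha_nonneg _) (pnb_nonneg hp0 hp1 _ _)
      calc a kl.1 * b kl.2
          = (a kl.1 * pnb p (r + 2) (kl.2 + (r + 2))) * f (kl.2 + (r + 2)) := by
            rw [hb_def]; ring
        _ ≤ (a kl.1 * pnb p (r + 2) (kl.2 + (r + 2))) * f (n + (r + 3)) :=
            mul_le_mul_of_nonneg_left (hf hle) hnn
    have step2 : ∑ kl ∈ Finset.HasAntidiagonal.antidiagonal n,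
          (a kl.1 * pnb p (r + 2) (kl.2 + (r + 2))) * f (n + (r + 3))
        = pnb p (r + 3) (n + (r + 3)) * f (n + (r + 3)) := by
      rw [← Finset.sum_mul]
      congr 1
      have hpnb3 : pnb p (r + 3) (n + (r + 3))
          = ((n + (r + 1)).choose (r + 1) : ℝ) * p ^ (r + 2) * (1 - p) ^ n := by
        have := pnb_shift p (r + 1) n
        simpa [show r + 1 + 2 = r + 3 by omega, show r + 1 + 1 = r + 2 by omega] using this
      rw [hpnb3, ← pnb_conv p r n]
      apply Finset.sum_congr rfl
      intro kl _
      rw [ha_def, pnb_shift]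
    exact step1.trans_eq step2
  have S1 : Summable (fun n : ℕ => ∑ kl ∈ Finset.HasAntidiagonal.antidiagonal n, a kl.1 * b kl.2) :=
    (summable_norm_sum_mul_antidiagonal_of_summable_norm Sa_norm Sb_norm).of_norm
  calc ∑' l : ℕ, pnb p (r + 2) l * f l
      = ∑' j, b j := tsum_pnb_shift hp0 hp1 hM r
    _ = (∑' k, a k) * (∑' j, b j) := by rw [ha, one_mul]
    _ = ∑' n, ∑ kl ∈ Finset.HasAntidiagonal.antidiagonal n, a kl.1 * b kl.2 :=
        tsum_mul_tsum_eq_tsum_sum_antidiagonal_of_summable_norm Sa_norm Sb_norm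
    _ ≤ ∑' n, pnb p (r + 3) (n + (r + 3)) * f (n + (r + 3)) :=
        Summable.tsum_le_tsum h1 S1 hS2.of_norm
    _ = ∑' l : ℕ, pnb p (r + 3) l * f l := by
        have := tsum_pnb_shift hp0 hp1 hM (r + 1)
        simpa [show r + 1 + 2 = r + 3 by omega] using this.symm

/-- Expectations of nondecreasing bounded functions are ordered according to
the stochastic dominance of the shifted negative-binomial pmfs. -/
theorem pnb_expectation_monotone (p : ℝ) (hp0 : 0 < p) (hp1 : p ≤ 1)
    (Lm Lj : ℕ) (hLm : 2 ≤ Lm) (hml : Lm ≤ Lj)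
    (f : ℕ → ℝ) (hf : Monotone f) (hbdd : ∃ M : ℝ, ∀ l, |f l| ≤ M) :
    ∑' l : ℕ, pnb p Lm l * f l ≤ ∑' l : ℕ, pnb p Lj l * f l := by
  obtain ⟨M, hM⟩ := hbdd
  induction Lj, hml using Nat.le_induction with
  | base => exact le_refl _
  | succ L hL ih =>
    refine ih.trans ?_
    obtain ⟨r, rfl⟩ : ∃ r, L = r + 2 := ⟨L - 2, by omega⟩
    have := pnb_step hp0 hp1 hf hM r
    simpa [show r + 2 + 1 = r + 3 by omega] using this
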